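/- Let V be a finite-dimensional vector space and S ⊆ GL(V) a set of operators. Define w(S) = Σᵢ (dim Uᵢ(S))², where U₁(S), …, U_k(S) are the maximal common eigenspaces of S (subspaces on which every s ∈ S acts as a scalar, maximal with this property). If S ⊆ T and there is a line invariant under S but not under T, then there exists g ∈ T with w(S ∪ {g}) < w(S). -/

import Mathlib

/-- `U` is a common eigenspace of the set `S` of automorphisms: every element of `S`
acts on `U` as a scalar. -/
def IsScalarOn {F V : Type*} [Field F] [AddCommGroup V] [Module F V]
    (S : Set (V ≃ₗ[F] V)) (U : Submodule F V) : Prop :=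
  ∀ g ∈ S, ∃ c : F, ∀ v ∈ U, g v = c • v

/-- `w(S)`: the sum of the squares of the dimensions of the maximal common
eigenspaces of `S`. -/
noncomputable def eigWeight {F V : Type*} [Field F] [AddCommGroup V] [Module F V]
    (S : Set (V ≃ₗ[F] V)) : ℕ :=
  ∑ᶠ U ∈ {U : Submodule F V | Maximal (IsScalarOn S) U}, (Module.finrank F U) ^ 2

open Module

section Aux

variable {F V : Type*} [Field F] [AddCommGroup V] [Module F V]

open Classical in
/-- The eigenvalue function of a subspace: for each `g`, a scalar by which `g` acts
on `U` (if one exists). -/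
noncomputable def charOf (U : Submodule F V) (g : V ≃ₗ[F] V) : F :=
  if h : ∃ c : F, ∀ v ∈ U, g v = c • v then h.choose else 0

lemma charOf_spec {S : Set (V ≃ₗ[F] V)} {U : Submodule F V} (hU : IsScalarOn S U)
    {g : V ≃ₗ[F] V} (hg : g ∈ S) : ∀ v ∈ U, g v = charOf U g • v := by
  have h := hU g hg
  rw [charOf, dif_pos h]
  exact h.choose_spec

lemma eq_of_scalar {U : Submodule F V} (h : U ≠ ⊥) {c d : F} {g : V ≃ₗ[F] V}
    (hc : ∀ v ∈ U, g v = c • v) (hd : ∀ v ∈ U, g v = d • v) : c = d := by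
  obtain ⟨v, hv, hv0⟩ := U.ne_bot_iff.1 h
  have : c • v = d • v := (hc v hv).symm.trans (hd v hv)
  by_contra hne
  exact hv0 ((smul_right_injective V (sub_ne_zero.2 hne)) (by simp [sub_smul, this]) : v = 0) |>.elim

/-- The simultaneous eigenspace for a prospective eigenvalue function `χ`. -/
def comEig (S : Set (V ≃ₗ[F] V)) (χ : (V ≃ₗ[F] V) → F) : Submodule F V :=
  ⨅ g ∈ S, Module.End.eigenspace (g : V →ₗ[F] V) (χ g)

lemma mem_comEig {S : Set (V ≃ₗ[F] V)} {χ : (V ≃ₗ[F] V) → F} {v : V} :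
    v ∈ comEig S χ ↔ ∀ g ∈ S, g v = χ g • v := by
  simp [comEig, Submodule.mem_iInf, Module.End.mem_eigenspace_iff]

lemma isScalarOn_comEig {S : Set (V ≃ₗ[F] V)} {χ : (V ≃ₗ[F] V) → F} :
    IsScalarOn S (comEig S χ) :=
  fun g hg => ⟨χ g, fun v hv => mem_comEig.1 hv g hg⟩

lemma le_comEig_charOf {S : Set (V ≃ₗ[F] V)} {U : Submodule F V} (hU : IsScalarOn S U) :
    U ≤ comEig S (charOf U) :=
  fun v hv => mem_comEig.2 fun g hg => charOf_spec hU hg v hv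

lemma comEig_congr {S : Set (V ≃ₗ[F] V)} {χ₁ χ₂ : (V ≃ₗ[F] V) → F}
    (h : ∀ g ∈ S, χ₁ g = χ₂ g) : comEig S χ₁ = comEig S χ₂ := by
  ext v
  simp only [mem_comEig]
  exact ⟨fun H g hg => by rw [← h g hg]; exact H g hg, fun H g hg => by rw [h g hg]; exact H g hg⟩

lemma charOf_eq_on {S : Set (V ≃ₗ[F] V)} {U U' : Submodule F V} (hU : IsScalarOn S U)
    (hU' : IsScalarOn S U') (hle : U ≤ U') (hne : U ≠ ⊥) {g : V ≃ₗ[F] V} (hg : g ∈ S) :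
    charOf U g = charOf U' g :=
  eq_of_scalar hne (charOf_spec hU hg) (fun v hv => charOf_spec hU' hg v (hle hv))

lemma maximal_comEig {S : Set (V ≃ₗ[F] V)} {χ : (V ≃ₗ[F] V) → F} (h : comEig S χ ≠ ⊥) :
    Maximal (IsScalarOn S) (comEig S χ) := by
  refine ⟨isScalarOn_comEig, fun U' hU' hle => ?_⟩
  have h1 : ∀ g' ∈ S, charOf (comEig S χ) g' = χ g' := fun g' hg' =>
    eq_of_scalar h (charOf_spec isScalarOn_comEig hg') (fun v hv => mem_comEig.1 hv g' hg')
  have hchar : ∀ g' ∈ S, charOf U' g' = χ g' := fun g' hg' =>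
    ((charOf_eq_on isScalarOn_comEig hU' hle h hg').symm).trans (h1 g' hg')
  calc U' ≤ comEig S (charOf U') := le_comEig_charOf hU'
    _ = comEig S χ := comEig_congr hchar

lemma maximal_eq_comEig {S : Set (V ≃ₗ[F] V)} {U : Submodule F V}
    (hU : Maximal (IsScalarOn S) U) (hne : U ≠ ⊥) : comEig S (charOf U) = U :=
  le_antisymm (hU.2 isScalarOn_comEig (le_comEig_charOf hU.1)) (le_comEig_charOf hU.1)

lemma comEig_union_singleton (S : Set (V ≃ₗ[F] V)) (g : V ≃ₗ[F] V) (χ : (V ≃ₗ[F] V) → F) :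
    comEig (S ∪ {g}) χ = comEig S χ ⊓ Module.End.eigenspace (g : V →ₗ[F] V) (χ g) := by
  ext v
  simp only [Submodule.mem_inf, mem_comEig, Set.mem_union, Set.mem_singleton_iff,
    Module.End.mem_eigenspace_iff, LinearEquiv.coe_coe]
  constructor
  · exact fun H => ⟨fun h hh => H h (Or.inl hh), H g (Or.inr rfl)⟩
  · rintro ⟨H1, H2⟩ h (hh | rfl)
    · exact H1 h hh
    · exact H2

lemma isScalarOn_mono {S S' : Set (V ≃ₗ[F] V)} {U : Submodule F V} (h : S ⊆ S')
    (hU : IsScalarOn S' U) : IsScalarOn S U := fun g hg => hU g (h hg)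

end Aux
section Aux2

variable {F V : Type*} [Field F] [AddCommGroup V] [Module F V]

lemma li_maximal (S : Set (V ≃ₗ[F] V)) :
    ∀ t : Finset (Submodule F V), ∀ c : Submodule F V → F, ∀ v : Submodule F V → V,
      (∀ U ∈ t, Maximal (IsScalarOn S) U) → (∀ U ∈ t, v U ∈ U) → (∀ U ∈ t, v U ≠ 0) →
      (∑ U ∈ t, c U • v U = 0) → ∀ U ∈ t, c U = 0 := by
  classical
  intro t
  induction t using Finset.strongInduction with
  | _ t ih =>
    intro c v hmax hv hv0 hsum U₂ hU₂
    by_cases hone : ∀ U ∈ t, U = U₂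
    · have ht : t = {U₂} := Finset.eq_singleton_iff_unique_mem.2 ⟨hU₂, hone⟩
      rw [ht, Finset.sum_singleton] at hsum
      rcases smul_eq_zero.1 hsum with h | h
      · exact h
      · exact absurd h (hv0 U₂ hU₂)
    · push_neg at hone
      obtain ⟨U₁, hU₁t, hU₁ne⟩ := hone
      have hb₁ : U₁ ≠ ⊥ := Submodule.ne_bot_iff _ |>.2 ⟨v U₁, hv _ hU₁t, hv0 _ hU₁t⟩
      have hb₂ : U₂ ≠ ⊥ := Submodule.ne_bot_iff _ |>.2 ⟨v U₂, hv _ hU₂, hv0 _ hU₂⟩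
      have hex : ∃ g ∈ S, charOf U₁ g ≠ charOf U₂ g := by
        by_contra hcon
        push_neg at hcon
        exact hU₁ne (by
          rw [← maximal_eq_comEig (hmax U₁ hU₁t) hb₁, ← maximal_eq_comEig (hmax U₂ hU₂) hb₂]
          exact comEig_congr hcon)
      obtain ⟨g, hgS, hgne⟩ := hex
      have hsum2 : ∑ U ∈ t, (c U * charOf U g) • v U = 0 := by
        calc ∑ U ∈ t, (c U * charOf U g) • v U = ∑ U ∈ t, g (c U • v U) := by
              refine Finset.sum_congr rfl fun U hU => ?_
              rw [map_smul, charOf_spec (hmax U hU).1 hgS (v U) (hv U hU), smul_smul]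
          _ = g (∑ U ∈ t, c U • v U) := (map_sum g _ t).symm
          _ = 0 := by rw [hsum, map_zero]
      have hsum3 : ∑ U ∈ t, (c U * (charOf U g - charOf U₁ g)) • v U = 0 := by
        calc ∑ U ∈ t, (c U * (charOf U g - charOf U₁ g)) • v U
            = ∑ U ∈ t, ((c U * charOf U g) • v U - charOf U₁ g • (c U • v U)) := by
              refine Finset.sum_congr rfl fun U hU => ?_
              rw [mul_sub, sub_smul, smul_smul, mul_comm (charOf U₁ g)]
          _ = 0 - charOf U₁ g • (0 : V) := by
              rw [Finset.sum_sub_distrib, hsum2, ← Finset.smul_sum, hsum]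
          _ = 0 := by simp
      have herase : ∑ U ∈ t.erase U₁, (c U * (charOf U g - charOf U₁ g)) • v U = 0 := by
        rw [Finset.sum_erase _ (by simp)]
        exact hsum3
      have hkey := ih (t.erase U₁) (Finset.erase_ssubset hU₁t) _ v
        (fun U hU => hmax U (Finset.mem_of_mem_erase hU))
        (fun U hU => hv U (Finset.mem_of_mem_erase hU))
        (fun U hU => hv0 U (Finset.mem_of_mem_erase hU)) herase U₂
        (Finset.mem_erase.2 ⟨fun h => hU₁ne h.symm, hU₂⟩)
      rcases mul_eq_zero.1 hkey with h | h
      · exact h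
      · exact absurd (sub_eq_zero.1 h).symm hgne

lemma finite_maximal [FiniteDimensional F V] (S : Set (V ≃ₗ[F] V)) :
    {U : Submodule F V | Maximal (IsScalarOn S) U ∧ U ≠ ⊥}.Finite := by
  classical
  by_contra hinf
  rw [← Set.Infinite] at hinf
  obtain ⟨t, hts, hcard⟩ := hinf.exists_subset_card_eq (finrank F V + 1)
  set v : Submodule F V → V := fun U => if h : U ≠ ⊥ then ((Submodule.ne_bot_iff U).1 h).choose else 0 with hvdef
  have hvmem : ∀ U ∈ t, v U ∈ U ∧ v U ≠ 0 := by
    intro U hU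
    have hb : U ≠ ⊥ := (hts hU).2
    rw [hvdef]
    simp only [dif_pos hb]
    exact ((Submodule.ne_bot_iff U).1 hb).choose_spec
  have hli : LinearIndependent F (fun x : ↥t => v ↑x) := by
    rw [Fintype.linearIndependent_iff]
    intro cc hcc i
    set c : Submodule F V → F := fun U => if h : U ∈ t then cc ⟨U, h⟩ else 0 with hcdef
    have hsum : ∑ U ∈ t, c U • v U = 0 := by
      calc ∑ U ∈ t, c U • v U = ∑ x ∈ t.attach, c ↑x • v ↑x := (Finset.sum_attach _ _).symm
        _ = ∑ x ∈ t.attach, cc x • v ↑x := Finset.sum_congr rfl fun x _ => by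
              rw [hcdef]; simp only [dif_pos x.2]
        _ = 0 := by rw [← Finset.univ_eq_attach]; exact hcc
    have hz := li_maximal S t c v (fun U hU => (hts hU).1) (fun U hU => (hvmem U hU).1)
      (fun U hU => (hvmem U hU).2) hsum ↑i i.2
    rw [hcdef] at hz
    simpa only [dif_pos i.2] using hz
  have hcard2 := hli.fintype_card_le_finrank
  rw [Fintype.card_coe, hcard] at hcard2
  omega

lemma exists_maximal_scalar [FiniteDimensional F V] {S : Set (V ≃ₗ[F] V)} {U : Submodule F V}
    (hU : IsScalarOn S U) : ∃ U', Maximal (IsScalarOn S) U' ∧ U ≤ U' := by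
  have hwf : WellFounded ((· > ·) : Submodule F V → Submodule F V → Prop) :=
    (IsNoetherian.wellFoundedGT (inferInstance : IsNoetherian F V)).wf
  obtain ⟨U', ⟨hU's, hUle⟩, hmin⟩ :=
    hwf.has_min {W | IsScalarOn S W ∧ U ≤ W} ⟨U, hU, le_refl U⟩
  refine ⟨U', ⟨hU's, fun W hW hle => ?_⟩, hUle⟩
  by_contra hnle
  exact hmin W ⟨hW, hUle.trans hle⟩ (lt_of_le_not_ge hle hnle)

lemma nat_sq_sum_le {ι : Type*} (t : Finset ι) (a : ι → ℕ) (D : ℕ) (h : ∑ i ∈ t, a i ≤ D) :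
    ∑ i ∈ t, a i ^ 2 ≤ D ^ 2 := by
  calc ∑ i ∈ t, a i ^ 2 ≤ ∑ i ∈ t, a i * D := by
        refine Finset.sum_le_sum fun i hi => ?_
        have hai : a i ≤ D := le_trans (Finset.single_le_sum (fun j _ => Nat.zero_le (a j)) hi) h
        rw [pow_two]
        exact Nat.mul_le_mul_left _ hai
    _ = (∑ i ∈ t, a i) * D := (Finset.sum_mul _ _ _).symm
    _ ≤ D * D := Nat.mul_le_mul_right _ h
    _ = D ^ 2 := (pow_two D).symm

lemma nat_sq_sum_lt {ι : Type*} (t : Finset ι) (a : ι → ℕ) (D : ℕ) (hD : 0 < D)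
    (h : ∑ i ∈ t, a i ≤ D) (hlt : ∀ i ∈ t, a i < D) : ∑ i ∈ t, a i ^ 2 < D ^ 2 := by
  calc ∑ i ∈ t, a i ^ 2 ≤ ∑ i ∈ t, a i * (D - 1) := by
        refine Finset.sum_le_sum fun i hi => ?_
        rw [pow_two]
        exact Nat.mul_le_mul_left _ (Nat.le_sub_one_of_lt (hlt i hi))
    _ = (∑ i ∈ t, a i) * (D - 1) := (Finset.sum_mul _ _ _).symm
    _ ≤ D * (D - 1) := Nat.mul_le_mul_right _ h
    _ < D * D := mul_lt_mul_of_pos_left (Nat.sub_lt hD one_pos) hD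
    _ = D ^ 2 := (pow_two D).symm

lemma sum_finrank_inf_eigenspace_le [FiniteDimensional F V] (g : V ≃ₗ[F] V)
    (U : Submodule F V) (t : Finset F) :
    ∑ c ∈ t, finrank F ↥(U ⊓ Module.End.eigenspace (g : V →ₗ[F] V) c) ≤ finrank F ↥U := by
  classical
  have key : ∀ s : Finset F,
      ∑ c ∈ s, finrank F ↥(U ⊓ Module.End.eigenspace (g : V →ₗ[F] V) c) ≤
        finrank F ↥(s.sup fun c => U ⊓ Module.End.eigenspace (g : V →ₗ[F] V) c) := by
    intro s
    induction s using Finset.induction_on with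
    | empty => simp
    | @insert a s ha ih =>
      rw [Finset.sum_insert ha, Finset.sup_insert]
      have h1 := (Module.End.eigenspaces_iSupIndep ((g : V →ₗ[F] V))) (i := a)
      have hdisj : Disjoint (U ⊓ Module.End.eigenspace (g : V →ₗ[F] V) a)
          (s.sup fun c => U ⊓ Module.End.eigenspace (g : V →ₗ[F] V) c) := by
        refine Disjoint.mono inf_le_right ?_ h1
        refine Finset.sup_le fun b hb => ?_
        have hba : b ≠ a := fun h => ha (h ▸ hb)
        exact le_trans inf_le_right (le_iSup_of_le b (le_iSup_of_le hba (le_refl _)))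
      have heq := Submodule.finrank_sup_add_finrank_inf_eq
        (U ⊓ Module.End.eigenspace (g : V →ₗ[F] V) a)
        (s.sup fun c => U ⊓ Module.End.eigenspace (g : V →ₗ[F] V) c)
      rw [hdisj.eq_bot, finrank_bot, add_zero] at heq
      omega
  refine le_trans (key t) (Submodule.finrank_mono ?_)
  exact Finset.sup_le fun c _ => inf_le_left

end Aux2
section Aux3

variable {F V : Type*} [Field F] [AddCommGroup V] [Module F V]

lemma scalar_line [FiniteDimensional F V] {ℓ : Submodule F V} (hℓ : finrank F ℓ = 1)
    (g : V ≃ₗ[F] V) (hmap : ℓ.map (g : V →ₗ[F] V) = ℓ) : ∃ c : F, ∀ v ∈ ℓ, g v = c • v := by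
  have hbot : ℓ ≠ ⊥ := by
    intro h
    rw [h, finrank_bot] at hℓ
    exact absurd hℓ (by norm_num)
  obtain ⟨v, hv, hv0⟩ := (Submodule.ne_bot_iff ℓ).1 hbot
  have hspan : Submodule.span F {v} = ℓ := by
    refine Submodule.eq_of_le_of_finrank_le ((Submodule.span_singleton_le_iff_mem v ℓ).2 hv) ?_
    rw [hℓ, finrank_span_singleton hv0]
  have hgv : g v ∈ ℓ := by
    rw [← hmap]
    exact Submodule.mem_map_of_mem hv
  rw [← hspan] at hgv
  obtain ⟨c, hc⟩ := Submodule.mem_span_singleton.1 hgv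
  refine ⟨c, fun w hw => ?_⟩
  rw [← hspan] at hw
  obtain ⟨a, ha⟩ := Submodule.mem_span_singleton.1 hw
  rw [← ha, map_smul, ← hc, smul_smul, smul_smul, mul_comm]

lemma map_line_eq {ℓ U : Submodule F V} (hle : ℓ ≤ U) (hU : U ≠ ⊥) {g : V ≃ₗ[F] V} {c : F}
    (hc : ∀ v ∈ U, g v = c • v) : ℓ.map (g : V →ₗ[F] V) = ℓ := by
  obtain ⟨u, hu, hu0⟩ := (Submodule.ne_bot_iff U).1 hU
  have hc0 : c ≠ 0 := by
    intro h
    apply hu0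
    have := hc u hu
    rw [h, zero_smul] at this
    exact g.map_eq_zero_iff.1 this
  apply le_antisymm
  · rw [Submodule.map_le_iff_le_comap]
    intro x hx
    have : g x = c • x := hc x (hle hx)
    simpa [Submodule.mem_comap, this] using ℓ.smul_mem c hx
  · intro x hx
    refine Submodule.mem_map.2 ⟨c⁻¹ • x, ℓ.smul_mem _ hx, ?_⟩
    have : g (c⁻¹ • x) = c • (c⁻¹ • x) := hc _ (hle (ℓ.smul_mem _ hx))
    rw [LinearEquiv.coe_coe, this, smul_smul, mul_inv_cancel₀ hc0, one_smul]

lemma eigWeight_eq_sum [FiniteDimensional F V] (S : Set (V ≃ₗ[F] V))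
    (hf : {U : Submodule F V | Maximal (IsScalarOn S) U ∧ U ≠ ⊥}.Finite) :
    eigWeight S = ∑ U ∈ hf.toFinset, finrank F ↥U ^ 2 := by
  rw [eigWeight]
  have hsupp : ∀ U ∈ Function.support (fun U : Submodule F V => finrank F ↥U ^ 2),
      (U ∈ {U : Submodule F V | Maximal (IsScalarOn S) U} ↔
        U ∈ {U : Submodule F V | Maximal (IsScalarOn S) U ∧ U ≠ ⊥}) := by
    intro U hU
    have hb : U ≠ ⊥ := by
      intro h
      apply hU
      show finrank F ↥U ^ 2 = 0
      rw [h, finrank_bot]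
      simp
    simp only [Set.mem_setOf_eq]
    tauto
  rw [finsum_mem_inter_support_eq' _ _ _ hsupp]
  exact finsum_mem_eq_finite_toFinset_sum _ hf

end Aux3

theorem stmt_4 (F V : Type*) [Field F] [AddCommGroup V] [Module F V]
    [FiniteDimensional F V] (S T : Set (V ≃ₗ[F] V)) (hST : S ⊆ T)
    (ℓ : Submodule F V) (hℓ : Module.finrank F ℓ = 1)
    (hSinv : ∀ g ∈ S, ℓ.map (g : V →ₗ[F] V) = ℓ)
    (hTnot : ∃ g ∈ T, ℓ.map (g : V →ₗ[F] V) ≠ ℓ) :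
    ∃ g ∈ T, eigWeight (S ∪ {g}) < eigWeight S := by
  classical
  obtain ⟨g₀, hg₀T, hg₀ℓ⟩ := hTnot
  refine ⟨g₀, hg₀T, ?_⟩
  have hℓbot : ℓ ≠ ⊥ := by
    intro h
    rw [h, finrank_bot] at hℓ
    exact absurd hℓ (by norm_num)
  have hscal : IsScalarOn S ℓ := fun g hg => scalar_line hℓ g (hSinv g hg)
  obtain ⟨U₀, hU₀max, hℓle⟩ := exists_maximal_scalar hscal
  have hU₀bot : U₀ ≠ ⊥ := fun h => hℓbot (le_bot_iff.1 (h ▸ hℓle))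
  have hU₀notS' : ¬ IsScalarOn (S ∪ {g₀}) U₀ := by
    intro hsc
    obtain ⟨c, hc⟩ := hsc g₀ (Or.inr rfl)
    exact hg₀ℓ (map_line_eq hℓle hU₀bot hc)
  have hfinS := finite_maximal (F := F) (V := V) S
  have hfinS' := finite_maximal (F := F) (V := V) (S ∪ {g₀})
  rw [eigWeight_eq_sum S hfinS, eigWeight_eq_sum _ hfinS']
  set A := hfinS.toFinset with hA
  set B := hfinS'.toFinset with hB
  have hmemB : ∀ W ∈ B, Maximal (IsScalarOn (S ∪ {g₀})) W ∧ W ≠ ⊥ := by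
    intro W hW
    rwa [hB, Set.Finite.mem_toFinset] at hW
  have hmemA : ∀ U : Submodule F V, U ∈ A ↔ Maximal (IsScalarOn S) U ∧ U ≠ ⊥ := by
    intro U
    rw [hA, Set.Finite.mem_toFinset]
    rfl
  set φ : Submodule F V → Submodule F V := fun W => comEig S (charOf W) with hφ
  have hWle : ∀ W ∈ B, W ≤ φ W := fun W hW =>
    le_comEig_charOf (isScalarOn_mono Set.subset_union_left (hmemB W hW).1.1)
  have hφA : ∀ W ∈ B, φ W ∈ A := by
    intro W hW
    rw [hmemA]
    have hne : φ W ≠ ⊥ := fun h => (hmemB W hW).2 (le_bot_iff.1 (h ▸ hWle W hW))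
    exact ⟨maximal_comEig hne, hne⟩
  rw [← Finset.sum_fiberwise_of_maps_to hφA (fun W => finrank F ↥W ^ 2)]
  -- key structure of fibers
  have key : ∀ U : Submodule F V, ∀ W ∈ B.filter (fun W => φ W = U),
      W = U ⊓ Module.End.eigenspace (g₀ : V →ₗ[F] V) (charOf W g₀) := by
    intro U W hW
    obtain ⟨hWB, hφW⟩ := Finset.mem_filter.1 hW
    calc W = comEig (S ∪ {g₀}) (charOf W) :=
          (maximal_eq_comEig (hmemB W hWB).1 (hmemB W hWB).2).symm
      _ = comEig S (charOf W) ⊓ Module.End.eigenspace (g₀ : V →ₗ[F] V) (charOf W g₀) :=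
          comEig_union_singleton S g₀ (charOf W)
      _ = U ⊓ Module.End.eigenspace (g₀ : V →ₗ[F] V) (charOf W g₀) :=
          congrArg (fun X => X ⊓ Module.End.eigenspace (g₀ : V →ₗ[F] V) (charOf W g₀)) hφW
  have hfibsum : ∀ U : Submodule F V,
      ∑ W ∈ B.filter (fun W => φ W = U), finrank F ↥W ≤ finrank F ↥U := by
    intro U
    have hinj : ∀ W₁ ∈ B.filter (fun W => φ W = U), ∀ W₂ ∈ B.filter (fun W => φ W = U),
        charOf W₁ g₀ = charOf W₂ g₀ → W₁ = W₂ := by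
      intro W₁ h₁ W₂ h₂ hc
      rw [key U W₁ h₁, key U W₂ h₂, hc]
    calc ∑ W ∈ B.filter (fun W => φ W = U), finrank F ↥W
        = ∑ cc ∈ (B.filter (fun W => φ W = U)).image (fun W => charOf W g₀),
            finrank F ↥(U ⊓ Module.End.eigenspace (g₀ : V →ₗ[F] V) cc) := by
          rw [Finset.sum_image hinj]
          exact Finset.sum_congr rfl fun W hW => by rw [← key U W hW]
      _ ≤ finrank F ↥U := sum_finrank_inf_eigenspace_le g₀ U _
  have hU₀A : U₀ ∈ A := (hmemA U₀).2 ⟨hU₀max, hU₀bot⟩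
  refine Finset.sum_lt_sum (fun U hU => ?_) ⟨U₀, hU₀A, ?_⟩
  · exact nat_sq_sum_le _ _ _ (hfibsum U)
  · have hDpos : 0 < finrank F ↥U₀ := by
      have := Submodule.finrank_mono hℓle
      omega
    refine nat_sq_sum_lt _ _ _ hDpos (hfibsum U₀) ?_
    intro W hW
    obtain ⟨hWB, hφW⟩ := Finset.mem_filter.1 hW
    have hWltU₀ : W < U₀ := by
      refine lt_of_le_of_ne (hφW ▸ hWle W hWB) ?_
      intro h
      exact hU₀notS' (h ▸ (hmemB W hWB).1.1)
    exact Submodule.finrank_lt_finrank_of_lt hWltU₀
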